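/- For all real δb and all x, z₁, z₂ ∈ ℝ³, |exp(i·δb·(φ(x,z₁) + φ(z₁,z₂) + φ(z₂,x))) − 1| ≤ |δb| · |x − z₁| · |z₁ − z₂|, where φ is the magnetic phase. -/

import Mathlib

noncomputable section

abbrev E3 := EuclideanSpace ℝ (Fin 3)

/-- The magnetic phase `φ(x,y) = (1/2) e₃ ⬝ (y ∧ x)` in coordinates. -/
def phi (x y : E3) : ℝ := (1 / 2) * (y 0 * x 1 - y 1 * x 0)

lemma exp_I_sub_one_le (t : ℝ) : ‖Complex.exp (Complex.I * t) - 1‖ ≤ |t| := by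
  have h : Complex.exp (Complex.I * t) - 1 =
      Complex.ofReal (Real.cos t - 1) + Complex.ofReal (Real.sin t) * Complex.I := by
    rw [mul_comm, Complex.exp_mul_I]
    push_cast [Complex.ofReal_cos, Complex.ofReal_sin]
    ring
  rw [h]
  have hnorm : ‖Complex.ofReal (Real.cos t - 1) + Complex.ofReal (Real.sin t) * Complex.I‖
      = Real.sqrt ((Real.cos t - 1)^2 + (Real.sin t)^2) := by
    rw [Complex.norm_def, Complex.normSq_apply]
    simp [Complex.add_re, Complex.add_im]
    ring_nf
    simp [Complex.cos_ofReal_re, Complex.sin_ofReal_re]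
  rw [hnorm]
  have h2 : (Real.cos t - 1)^2 + (Real.sin t)^2 = (2 * Real.sin (t/2))^2 := by
    have h3 : Real.cos (2 * (t/2)) = 2 * Real.cos (t/2)^2 - 1 := Real.cos_two_mul _
    rw [show 2 * (t/2) = t by ring] at h3
    have hc := Real.sin_sq_add_cos_sq t
    have hc2 := Real.sin_sq_add_cos_sq (t/2)
    nlinarith [h3, hc, hc2]
  rw [h2, Real.sqrt_sq_eq_abs]
  have := Real.abs_sin_le_abs (x := t / 2)
  rw [abs_mul, abs_div] at *
  simp only [abs_two] at *
  linarith [this]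

lemma coord_sq_le (a : E3) : (a 0)^2 + (a 1)^2 ≤ ‖a‖^2 := by
  rw [EuclideanSpace.norm_eq, Real.sq_sqrt (by positivity)]
  have : ∑ i : Fin 3, a i ^ 2 = (a 0)^2 + (a 1)^2 + (a 2)^2 := by
    simp [Fin.sum_univ_three]
  simp only [Real.norm_eq_abs, sq_abs]
  rw [this]
  nlinarith [sq_nonneg (a 2)]

theorem exp_phase_sum_bound (δb : ℝ) (x z₁ z₂ : E3) :
    ‖Complex.exp (Complex.I * (δb * (phi x z₁ + phi z₁ z₂ + phi z₂ x))) - 1‖ ≤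
      |δb| * (‖x - z₁‖ * ‖z₁ - z₂‖) := by
  have h1 : ‖Complex.exp (Complex.I * ((δb * (phi x z₁ + phi z₁ z₂ + phi z₂ x) : ℝ) : ℂ)) - 1‖
      ≤ |δb * (phi x z₁ + phi z₁ z₂ + phi z₂ x)| := exp_I_sub_one_le _
  rw [show ((δb * (phi x z₁ + phi z₁ z₂ + phi z₂ x) : ℝ) : ℂ)
      = (δb : ℂ) * ((phi x z₁ : ℂ) + (phi z₁ z₂ : ℂ) + (phi z₂ x : ℂ)) by push_cast; ring] at h1
  refine h1.trans ?_
  rw [abs_mul]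
  gcongr
  -- |phi sum| ≤ ‖x - z₁‖ * ‖z₁ - z₂‖
  set a := x - z₁
  set b := z₁ - z₂
  have ha0 : a 0 = x 0 - z₁ 0 := rfl
  have ha1 : a 1 = x 1 - z₁ 1 := rfl
  have hb0 : b 0 = z₁ 0 - z₂ 0 := rfl
  have hb1 : b 1 = z₁ 1 - z₂ 1 := rfl
  have key : phi x z₁ + phi z₁ z₂ + phi z₂ x = -(1/2) * (a 0 * b 1 - a 1 * b 0) := by
    simp only [phi, ha0, ha1, hb0, hb1]; ring
  rw [key]
  have hca : (a 0)^2 + (a 1)^2 ≤ ‖a‖^2 := coord_sq_le a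
  have hcb : (b 0)^2 + (b 1)^2 ≤ ‖b‖^2 := coord_sq_le b
  have hcs : (a 0 * b 1 - a 1 * b 0)^2 ≤ ((a 0)^2 + (a 1)^2) * ((b 0)^2 + (b 1)^2) := by
    nlinarith [sq_nonneg (a 0 * b 0 + a 1 * b 1)]
  have habs : |a 0 * b 1 - a 1 * b 0| ≤ ‖a‖ * ‖b‖ := by
    rw [← Real.sqrt_sq_eq_abs]
    have : ‖a‖ * ‖b‖ = Real.sqrt ((‖a‖ * ‖b‖)^2) := by
      rw [Real.sqrt_sq (by positivity)]
    rw [this]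
    apply Real.sqrt_le_sqrt
    calc (a 0 * b 1 - a 1 * b 0)^2 ≤ ((a 0)^2 + (a 1)^2) * ((b 0)^2 + (b 1)^2) := hcs
      _ ≤ ‖a‖^2 * ‖b‖^2 := by
          apply mul_le_mul hca hcb (by positivity) (by positivity)
      _ = (‖a‖ * ‖b‖)^2 := by ring
  rw [abs_mul]
  calc |(-(1/2) : ℝ)| * |a 0 * b 1 - a 1 * b 0| ≤ 1 * (‖a‖ * ‖b‖) := by
        rw [abs_neg, abs_of_nonneg (by norm_num : ((1:ℝ)/2) ≥ 0)]
        apply mul_le_mul (by norm_num) habs (abs_nonneg _) (by norm_num)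
    _ = ‖a‖ * ‖b‖ := by ring
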